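/- arXiv:2206.03831 — 2 statements merged into one kernel-verified Lean document; each statement's English description precedes it below -/
import Mathlib

section
/- Let z*(N) > 0 be the unique positive solution of z² = N((z+1)ln(z+1) − z) and a_N = (z*(N) + N)²/((z*(N) + 1)·N). Then a_N / ln N → 1 as N → ∞. -/
open Filter

lemma fLower (x : ℝ) (hx : 0 < x) :
    x ^ 2 / (2 * (x + 2)) ≤ (x + 1) * Real.log (x + 1) - x := by
  set s := Real.sqrt (x + 1) with hs
  have hs2 : s ^ 2 = x + 1 := Real.sq_sqrt (by linarith)
  have hspos : 0 < s := Real.sqrt_pos.2 (by linarith)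
  have h1 : Real.log s⁻¹ ≤ s⁻¹ - 1 := Real.log_le_sub_one_of_pos (by positivity)
  have h2 : Real.log s = Real.log (x + 1) / 2 := Real.log_sqrt (by linarith)
  rw [Real.log_inv, h2] at h1
  have hL : 2 - 2 * s⁻¹ ≤ Real.log (x + 1) := by linarith
  have key : 2 * (x + 1) - 2 * s ≤ (x + 1) * Real.log (x + 1) := by
    have h3 := mul_le_mul_of_nonneg_left hL (by linarith : (0:ℝ) ≤ x + 1)
    have hinv : (x + 1) * s⁻¹ = s := by
      field_simp
      nlinarith [hs2]
    nlinarith [h3, hinv]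
  have h2s : 2 * s ≤ x + 2 := by nlinarith [hs2, sq_nonneg (s - 1)]
  have hfin : x ^ 2 / (2 * (x + 2)) ≤ x + 2 - 2 * s := by
    rw [div_le_iff₀ (by linarith)]
    nlinarith [hs2, h2s]
  linarith

lemma logUpper (x : ℝ) (hx : 0 ≤ x) : Real.log (x + 1) ≤ 2 * Real.sqrt (x + 1) := by
  set s := Real.sqrt (x + 1) with hs
  have hspos : 0 < s := Real.sqrt_pos.2 (by linarith)
  have h1 : Real.log s ≤ s - 1 := Real.log_le_sub_one_of_pos hspos
  have h2 : Real.log s = Real.log (x + 1) / 2 := Real.log_sqrt (by linarith)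
  linarith [h2 ▸ h1]

set_option maxHeartbeats 1000000 in
theorem harmonic_mean_scaling_factor_tendsto (z : ℕ → ℝ)
    (hz : ∀ N : ℕ, 2 ≤ N → 0 < z N ∧
      z N ^ 2 = N * ((z N + 1) * Real.log (z N + 1) - z N)) :
    Tendsto (fun N : ℕ => (z N + N) ^ 2 / ((z N + 1) * N) / Real.log N)
      atTop (nhds 1) := by
  set lo : ℕ → ℝ := fun N => ((N : ℝ) / (N + 1)) * ((Real.log N - 1) / Real.log N) with hlo_def
  set hi : ℕ → ℝ := fun N =>
    (Real.log 7 / Real.log N + 1 + Real.log (Real.log N) / Real.log N)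
      * (1 + 1 / (Real.log N - 1)) ^ 2 with hhi_def
  have t_log : Tendsto (fun N : ℕ => Real.log N) atTop atTop :=
    Real.tendsto_log_atTop.comp tendsto_natCast_atTop_atTop
  have t_invlog : Tendsto (fun N : ℕ => 1 / Real.log N) atTop (nhds 0) := by
    simp only [one_div]
    exact t_log.inv_tendsto_atTop
  have t_loglog : Tendsto (fun N : ℕ => Real.log (Real.log N) / Real.log N) atTop (nhds 0) :=
    (Real.isLittleO_log_id_atTop.tendsto_div_nhds_zero).comp t_log
  have t_invlog1 : Tendsto (fun N : ℕ => 1 / (Real.log N - 1)) atTop (nhds 0) := by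
    simp only [one_div, sub_eq_add_neg]
    exact
      (tendsto_atTop_add_const_right atTop (-1) t_log).inv_tendsto_atTop
  have hlo : Tendsto lo atTop (nhds 1) := by
    have h1 : Tendsto (fun N : ℕ => (N : ℝ) / (N + 1)) atTop (nhds 1) :=
      tendsto_natCast_div_add_atTop 1
    have h2 : Tendsto (fun N : ℕ => (Real.log N - 1) / Real.log N) atTop (nhds 1) := by
      have hc : Tendsto (fun _ : ℕ => (1:ℝ)) atTop (nhds 1) := tendsto_const_nhds
      have := hc.sub t_invlog
      rw [sub_zero] at this
      apply this.congr'
      filter_upwards [t_log.eventually_gt_atTop 0] with N hN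
      field_simp
    simpa using h1.mul h2
  have hhi : Tendsto hi atTop (nhds 1) := by
    have t_c : Tendsto (fun N : ℕ => Real.log 7 / Real.log N) atTop (nhds 0) := by
      simpa [div_eq_mul_inv] using t_invlog.const_mul (Real.log 7)
    have h1 : Tendsto (fun N : ℕ =>
        Real.log 7 / Real.log N + 1 + Real.log (Real.log N) / Real.log N) atTop (nhds 1) := by
      simpa using (t_c.add tendsto_const_nhds).add t_loglog
    have h2 : Tendsto (fun N : ℕ => (1 + 1 / (Real.log N - 1)) ^ 2) atTop (nhds 1) := by
      have hc : Tendsto (fun _ : ℕ => (1:ℝ)) atTop (nhds 1) := tendsto_const_nhds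
      have := hc.add t_invlog1
      rw [add_zero] at this
      simpa using this.pow 2
    rw [hhi_def]
    simpa [one_div] using h1.mul h2
  -- the key pointwise bounds
  have key : ∀ N : ℕ, 1000 ≤ N →
      lo N ≤ (z N + N) ^ 2 / ((z N + 1) * N) / Real.log N ∧
      (z N + N) ^ 2 / ((z N + 1) * N) / Real.log N ≤ hi N := by
    intro N hN
    obtain ⟨hx, E⟩ := hz N (by omega)
    set x := z N with hxdef
    set n : ℝ := (N : ℝ) with hndef
    have hn : (1000 : ℝ) ≤ n := by rw [hndef]; exact_mod_cast hN
    have hnpos : (0 : ℝ) < n := by linarith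
    set L := Real.log (x + 1) with hLdef
    -- Step 1 : x ≥ n/2 - 2
    have h1 : n * (x ^ 2 / (2 * (x + 2))) ≤ x ^ 2 := by
      calc n * (x ^ 2 / (2 * (x + 2)))
          ≤ n * ((x + 1) * L - x) :=
            mul_le_mul_of_nonneg_left (fLower x hx) (by linarith)
        _ = x ^ 2 := E.symm
    have h1' : n * x ^ 2 ≤ 2 * (x + 2) * x ^ 2 := by
      have hpos : (0:ℝ) < 2 * (x + 2) := by linarith
      calc n * x ^ 2 = (2 * (x + 2)) * (n * (x ^ 2 / (2 * (x + 2)))) := by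
            field_simp
        _ ≤ (2 * (x + 2)) * x ^ 2 := mul_le_mul_of_nonneg_left h1 hpos.le
    have hx1 : n / 2 - 2 ≤ x := by nlinarith [mul_pos hx hx]
    -- Step 2 : L ≥ 2
    have hexp2 : Real.exp 2 ≤ x + 1 := by
      have he : Real.exp 2 = Real.exp 1 * Real.exp 1 := by
        rw [← Real.exp_add]; norm_num
      have := Real.exp_one_lt_d9
      nlinarith [Real.exp_pos 1]
    have hL2 : 2 ≤ L := (Real.le_log_iff_exp_le (by linarith)).2 hexp2
    have hLpos : 0 < L := by linarith
    -- Step 3 : x ≥ n (L - 1)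
    have h3 : n * (x * L - x) ≤ x ^ 2 := by
      calc n * (x * L - x) ≤ n * ((x + 1) * L - x) :=
            mul_le_mul_of_nonneg_left (by nlinarith) (by linarith)
        _ = x ^ 2 := E.symm
    have hx3 : n * (L - 1) ≤ x := by nlinarith [mul_pos hx hx]
    have hxn : n ≤ x := by nlinarith
    -- log n bounds
    have hlogn : Real.log n ≤ L := Real.log_le_log (by linarith) (by linarith)
    have hlogn2 : 2 ≤ Real.log n := by
      rw [Real.le_log_iff_exp_le (by linarith)]
      have he : Real.exp 2 = Real.exp 1 * Real.exp 1 := by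
        rw [← Real.exp_add]; norm_num
      have := Real.exp_one_lt_d9
      nlinarith [Real.exp_pos 1]
    have hlognpos : 0 < Real.log n := by linarith
    have hx3' : n * (Real.log n - 1) ≤ x := by nlinarith
    -- Step 4 : upper equation
    have hup : x ^ 2 ≤ n * ((x + 1) * L) := by
      calc x ^ 2 = n * ((x + 1) * L - x) := E
        _ ≤ n * ((x + 1) * L) :=
            mul_le_mul_of_nonneg_left (sub_le_self ((x + 1) * L) hx.le)
              (le_of_lt hnpos)
    -- Step 5 : crude bound x ≤ 32 n²
    have hL2s : L ≤ 2 * Real.sqrt (x + 1) := logUpper x hx.le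
    have hs2 : (Real.sqrt (x + 1)) ^ 2 = x + 1 := Real.sq_sqrt (by linarith)
    have hsnn : 0 ≤ Real.sqrt (x + 1) := Real.sqrt_nonneg _
    have h5a : x * x ≤ (4 * n * Real.sqrt (x + 1)) * x := by
      nlinarith [mul_le_mul_of_nonneg_left hL2s (by nlinarith : (0:ℝ) ≤ n * (x + 1))]
    have h5b : x ≤ 4 * n * Real.sqrt (x + 1) := le_of_mul_le_mul_right h5a hx
    have h5c : x * x ≤ (32 * n ^ 2) * x := by
      nlinarith [mul_le_mul h5b h5b hx.le (by positivity), hs2]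
    have h5 : x ≤ 32 * n ^ 2 := le_of_mul_le_mul_right h5c hx
    -- Step 6 : L ≤ 3 log n
    have h6 : L ≤ 3 * Real.log n := by
      have ha : L ≤ Real.log (33 * n ^ 2) := Real.log_le_log (by linarith) (by nlinarith)
      have hb : Real.log (33 * n ^ 2) = Real.log 33 + 2 * Real.log n := by
        rw [Real.log_mul (by norm_num) (by positivity), Real.log_pow]
        push_cast; ring
      have hc : Real.log 33 ≤ Real.log n := Real.log_le_log (by norm_num) (by linarith)
      linarith
    -- Step 7 : x + 1 ≤ 7 n log n, hence L ≤ log 7 + log n + log log n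
    have h7a : x * x ≤ (2 * n * L) * x := by nlinarith
    have h7b : x ≤ 2 * n * L := le_of_mul_le_mul_right h7a hx
    have h7c : x + 1 ≤ 7 * (n * Real.log n) := by nlinarith
    have h7 : L ≤ Real.log 7 + Real.log n + Real.log (Real.log n) := by
      have ha : L ≤ Real.log (7 * (n * Real.log n)) :=
        Real.log_le_log (by linarith) h7c
      rw [Real.log_mul (by norm_num) (by positivity),
        Real.log_mul (by positivity) (by positivity)] at ha
      linarith
    -- nonzeroness
    have hx0 : x ≠ 0 := ne_of_gt hx
    have hx10 : x + 1 ≠ 0 := by positivity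
    have hn0 : n ≠ 0 := ne_of_gt hnpos
    have hlogn0 : Real.log n ≠ 0 := ne_of_gt hlognpos
    -- the decomposition identity
    have hid : (x + n) ^ 2 / ((x + 1) * n) / Real.log n
        = (x ^ 2 / ((x + 1) * n * Real.log n)) * ((x + n) / x) ^ 2 := by
      field_simp
    have hf1 : x ^ 2 / ((x + 1) * n * Real.log n) ≤ L / Real.log n := by
      rw [div_le_div_iff₀ (by positivity) hlognpos]
      nlinarith [mul_le_mul_of_nonneg_right hup hlognpos.le]
    have hf1' : L / Real.log n
        ≤ Real.log 7 / Real.log n + 1 + Real.log (Real.log n) / Real.log n := by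
      rw [div_le_iff₀ hlognpos]
      have heq : (Real.log 7 / Real.log n + 1 + Real.log (Real.log n) / Real.log n)
          * Real.log n = Real.log 7 + Real.log n + Real.log (Real.log n) := by
        field_simp
      rw [heq]
      exact h7
    have hbase : (x + n) / x ≤ 1 + 1 / (Real.log n - 1) := by
      have hnx : n / x ≤ 1 / (Real.log n - 1) := by
        rw [div_le_div_iff₀ hx (by linarith)]
        nlinarith
      calc (x + n) / x = 1 + n / x := by field_simp
        _ ≤ 1 + 1 / (Real.log n - 1) := by linarith
    have hf2 : ((x + n) / x) ^ 2 ≤ (1 + 1 / (Real.log n - 1)) ^ 2 :=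
      pow_le_pow_left₀ (by positivity) hbase 2
    have hf2' : 1 ≤ ((x + n) / x) ^ 2 := by
      have hone : (1:ℝ) ≤ (x + n) / x := by
        rw [le_div_iff₀ hx]; linarith
      exact one_le_pow₀ hone
    constructor
    · -- lower bound
      have hstep : (n / (n + 1)) * ((Real.log n - 1) / Real.log n)
          ≤ x ^ 2 / ((x + 1) * n * Real.log n) := by
        rw [div_mul_div_comm, div_le_div_iff₀ (by positivity) (by positivity)]
        have k3 : x * ((x + 1) * n * Real.log n) ≤ x ^ 2 * ((n + 1) * Real.log n) := by
          nlinarith [mul_nonneg (mul_nonneg hx.le hlognpos.le) (sub_nonneg.2 hxn)]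
        have k4 := mul_le_mul_of_nonneg_right hx3'
            (by positivity : (0:ℝ) ≤ (x + 1) * n * Real.log n)
        linarith
      calc lo N = (n / (n + 1)) * ((Real.log n - 1) / Real.log n) := rfl
        _ ≤ x ^ 2 / ((x + 1) * n * Real.log n) := hstep
        _ ≤ (x ^ 2 / ((x + 1) * n * Real.log n)) * ((x + n) / x) ^ 2 :=
            le_mul_of_one_le_right (by positivity) hf2'
        _ = (x + n) ^ 2 / ((x + 1) * n) / Real.log n := hid.symm
    · -- upper bound
      have hA : 0 ≤ Real.log 7 := Real.log_nonneg (by norm_num)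
      have hB : 0 ≤ Real.log (Real.log n) := Real.log_nonneg (by linarith)
      have hC : 0 ≤ Real.log 7 / Real.log n + 1 + Real.log (Real.log n) / Real.log n := by
        have := div_nonneg hA hlognpos.le
        have := div_nonneg hB hlognpos.le
        linarith
      calc (x + n) ^ 2 / ((x + 1) * n) / Real.log n
          = (x ^ 2 / ((x + 1) * n * Real.log n)) * ((x + n) / x) ^ 2 := hid
        _ ≤ (Real.log 7 / Real.log n + 1 + Real.log (Real.log n) / Real.log n)
              * (1 + 1 / (Real.log n - 1)) ^ 2 :=
            mul_le_mul (hf1.trans hf1') hf2 (by positivity) hC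
        _ = hi N := rfl
  apply tendsto_of_tendsto_of_tendsto_of_le_of_le' hlo hhi
  · filter_upwards [eventually_ge_atTop 1000] with N hN
    exact (key N hN).1
  · filter_upwards [eventually_ge_atTop 1000] with N hN
    exact (key N hN).2
end

section
/- Let Σ₁, Σ₂ be symmetric positive-definite K×K matrices and suppose Σ₁ = B Bᵀ = C Cᵀ and Σ₂ = B Λ Bᵀ = C Λ' Cᵀ, where B, C are invertible and Λ, Λ' are diagonal with positive entries. If the diagonal entries of Λ are pairwise distinct and arranged in the same (say, strictly decreasing) order as those of Λ', then Λ = Λ' and C = B D for some diagonal matrix D with diagonal entries in {−1, +1}. -/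
open Matrix

theorem B_unique_up_to_column_signs
    {K : ℕ} (B C S₁ S₂ : Matrix (Fin K) (Fin K) ℝ) (l l' : Fin K → ℝ)
    (hB : IsUnit B) (hC : IsUnit C)
    (hlpos : ∀ k, 0 < l k) (hl'pos : ∀ k, 0 < l' k)
    (hldec : StrictAnti l) (hl'dec : Antitone l')
    (hS₁B : S₁ = B * Bᵀ) (hS₁C : S₁ = C * Cᵀ)
    (hS₂B : S₂ = B * Matrix.diagonal l * Bᵀ)
    (hS₂C : S₂ = C * Matrix.diagonal l' * Cᵀ) :
    l = l' ∧ ∃ d : Fin K → ℝ, (∀ k, d k = 1 ∨ d k = -1) ∧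
      C = B * Matrix.diagonal d := by
  have hBd : IsUnit B.det := (Matrix.isUnit_iff_isUnit_det B).mp hB
  have hBtd : IsUnit Bᵀ.det := by rwa [Matrix.det_transpose]
  set M := B⁻¹ * C with hM
  have hBM : B * M = C := by
    rw [hM, ← Matrix.mul_assoc, Matrix.mul_nonsing_inv B hBd, Matrix.one_mul]
  have h1 : B * Bᵀ = C * Cᵀ := hS₁B ▸ hS₁C
  have hMT : Mᵀ = Cᵀ * (Bᵀ)⁻¹ := by
    rw [hM, Matrix.transpose_mul, Matrix.transpose_nonsing_inv]
  have horth : M * Mᵀ = 1 := by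
    rw [hM, hMT, Matrix.mul_assoc, ← Matrix.mul_assoc C, ← h1,
      Matrix.mul_assoc B, Matrix.mul_nonsing_inv Bᵀ hBtd, Matrix.mul_one,
      Matrix.nonsing_inv_mul B hBd]
  have hMtM : Mᵀ * M = 1 := mul_eq_one_comm.mp horth
  -- commutation relation
  have h2 : B * Matrix.diagonal l * Bᵀ = B * M * Matrix.diagonal l' * (B * M)ᵀ := by
    rw [hBM, ← hS₂B, ← hS₂C]
  have hcomm : Matrix.diagonal l * M = M * Matrix.diagonal l' := by
    have h3 : B * (Matrix.diagonal l * Bᵀ)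
        = B * (M * Matrix.diagonal l' * Mᵀ * Bᵀ) := by
      rw [← Matrix.mul_assoc, h2, Matrix.transpose_mul]
      noncomm_ring
    have h4 : Matrix.diagonal l * Bᵀ = M * Matrix.diagonal l' * Mᵀ * Bᵀ := by
      have := congrArg (fun X => B⁻¹ * X) h3
      simpa [← Matrix.mul_assoc, Matrix.nonsing_inv_mul B hBd] using this
    have h5 : Matrix.diagonal l = M * Matrix.diagonal l' * Mᵀ := by
      have := congrArg (fun X => X * (Bᵀ)⁻¹) h4
      simpa [Matrix.mul_assoc, Matrix.mul_nonsing_inv Bᵀ hBtd] using this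
    rw [h5, Matrix.mul_assoc, Matrix.mul_assoc, hMtM, Matrix.mul_one]
  have key : ∀ i j, M i j ≠ 0 → l i = l' j := by
    intro i j h
    have := congrFun (congrFun hcomm i) j
    rw [Matrix.diagonal_mul, Matrix.mul_diagonal] at this
    rw [mul_comm (M i j)] at this
    exact mul_right_cancel₀ h this
  have hcol : ∀ j, ∑ i, M i j * M i j = 1 := by
    intro j
    have := congrFun (congrFun hMtM j) j
    simpa [Matrix.mul_apply, Matrix.transpose_apply, Matrix.one_apply,
      mul_comm] using this
  have hrow : ∀ i, ∑ j, M i j * M i j = 1 := by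
    intro i
    have := congrFun (congrFun horth i) i
    simpa [Matrix.mul_apply, Matrix.transpose_apply, Matrix.one_apply] using this
  have hcolnz : ∀ j, ∃ i, M i j ≠ 0 := by
    intro j
    by_contra h
    push_neg at h
    have := hcol j
    simp [h] at this
  have hrownz : ∀ i, ∃ j, M i j ≠ 0 := by
    intro i
    by_contra h
    push_neg at h
    have := hrow i
    simp [h] at this
  have linj : Function.Injective l := hldec.injective
  choose σ hσ using hcolnz
  have hlσ : ∀ j, l (σ j) = l' j := fun j => key _ j (hσ j)
  have hsurj : Function.Surjective σ := by
    intro i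
    obtain ⟨j, hj⟩ := hrownz i
    exact ⟨j, linj ((hlσ j).trans (key i j hj).symm)⟩
  have hinj : Function.Injective σ := Finite.injective_iff_surjective.mpr hsurj
  have hmono : Monotone σ := by
    intro a b hab
    have h1 : l' b ≤ l' a := hl'dec hab
    rw [← hlσ, ← hlσ] at h1
    exact hldec.le_iff_ge.mp h1
  have hsm : StrictMono σ := hmono.strictMono_of_injective hinj
  have hσid : σ = id := by
    haveI : WellFoundedLT (Fin K) := Finite.to_wellFoundedLT
    apply (hsm.range_inj strictMono_id).1
    rw [Set.range_id, Set.range_eq_univ.mpr hsurj]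
  have hll' : l = l' := by
    funext j
    rw [← hlσ j, hσid, id]
  refine ⟨hll', fun k => M k k, ?_, ?_⟩
  · intro k
    have hdk : M k k * M k k = 1 := by
      have := hcol k
      rw [Finset.sum_eq_single k] at this
      · exact this
      · intro i _ hik
        have : M i k = 0 := by
          by_contra h
          have := key i k h
          rw [← hll'] at this
          exact hik (linj this)
        simp [this]
      · simp
    exact mul_self_eq_one_iff.mp hdk
  · rw [← hBM]
    congr 1
    ext i j
    by_cases hij : i = j
    · subst hij; simp
    · have hz : M i j = 0 := by
        by_contra h
        have := key i j h
        rw [← hll'] at this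
        exact hij (linj this)
      simp [Matrix.diagonal_apply_ne _ hij, hz]
end
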